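/- Fix integers x ≥ y ≥ 4. Define a simple graph on the x+y−2 vertices v_1, …, v_x, w_1, …, w_{y−2} with the following edges: the cycle v_1 v_2 … v_x v_1; the path w_1 w_2 … w_{y−2}; the edges w_{y−2} v_x and v_{x−1} w_1; the edges v_1 w_j for all 1 ≤ j ≤ y−2; and the edges w_1 v_i for all 2 ≤ i ≤ x−2. Then in this graph, the vertex v_1 has degree y, the vertex w_1 has degree x, and every other vertex has degree 3; that is, its degree sequence is x, y, 3^{x+y−4}. -/

import Mathlib

open scoped Classical

noncomputable section

/-- Euclidean 3-space. -/
abbrev E3 : Type := EuclideanSpace ℝ (Fin 3)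

/-- A 3-dimensional convex polytope in ℝ³: the convex hull of a finite set of points,
having nonempty interior (so that it is genuinely 3-dimensional). -/
def IsPolytope3 (P : Set E3) : Prop :=
  (∃ S : Finset E3, P = convexHull ℝ (S : Set E3)) ∧ (interior P).Nonempty

/-- The affine dimension of a subset of ℝ³. -/
def affDim (F : Set E3) : ℕ :=
  Module.finrank ℝ (affineSpan ℝ F).direction

/-- A face of a polytope `P`: a nonempty convex extreme subset of `P`. -/
def IsFaceOf (P F : Set E3) : Prop :=
  IsExtreme ℝ P F ∧ Convex ℝ F ∧ F.Nonempty

/-- The vertices of a polytope are its extreme points. -/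
def IsVertexOf (P : Set E3) (v : E3) : Prop :=
  v ∈ Set.extremePoints ℝ P

/-- The edges of a polytope are its 1-dimensional faces. -/
def IsEdgeOf (P e : Set E3) : Prop :=
  IsFaceOf P e ∧ affDim e = 1

/-- The 2-faces of a (3-dimensional) polytope are its 2-dimensional faces. -/
def Is2FaceOf (P F : Set E3) : Prop :=
  IsFaceOf P F ∧ affDim F = 2

/-- The 1-skeleton of a polytope: the graph on its vertices in which two vertices are
adjacent exactly when the segment between them is an edge of the polytope. -/
def skeleton (P : Set E3) : SimpleGraph {v : E3 // IsVertexOf P v} where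
  Adj v w := v ≠ w ∧ IsEdgeOf P (segment ℝ (v : E3) (w : E3))
  symm := by
    constructor
    rintro v w ⟨hne, he⟩
    exact ⟨hne.symm, by rwa [segment_symm]⟩
  loopless := by
    constructor
    rintro v ⟨hne, -⟩
    exact hne rfl

/-- The face-adjacency graph of a polytope (the graph of the dual polytope): its vertices
are the 2-faces of the polytope, two of them being adjacent exactly when they share an
edge of the polytope. -/
def faceGraph (P : Set E3) : SimpleGraph {F : Set E3 // Is2FaceOf P F} where
  Adj F F' := F ≠ F' ∧ ∃ e : Set E3, IsEdgeOf P e ∧ e ⊆ (F : Set E3) ∧ e ⊆ (F' : Set E3)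
  symm := by
    constructor
    rintro F F' ⟨hne, e, he, h1, h2⟩
    exact ⟨hne.symm, e, he, h2, h1⟩
  loopless := by
    constructor
    rintro F ⟨hne, -⟩
    exact hne rfl

/-- A graph is polyhedral (`3`-polytopal) if it is isomorphic to the 1-skeleton of a
3-dimensional convex polytope; by the Rademacher–Steinitz theorem this is equivalent to
being a planar, 3-connected simple graph. -/
def Polyhedral {V : Type*} (G : SimpleGraph V) : Prop :=
  ∃ P : Set E3, IsPolytope3 P ∧ Nonempty (G ≃g skeleton P)

/-- A polyhedral graph is self-dual if it is isomorphic to its dual graph, i.e. it has a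
polytopal realisation whose face-adjacency graph is again isomorphic to the graph itself. -/
def SelfDual {V : Type*} (G : SimpleGraph V) : Prop :=
  ∃ P : Set E3, IsPolytope3 P ∧ Nonempty (G ≃g skeleton P) ∧ Nonempty (G ≃g faceGraph P)

/-- The degree sequence (multiset of vertex degrees) of a finite simple graph. -/
def degSeq {V : Type*} [Fintype V] (G : SimpleGraph V) : Multiset ℕ :=
  (Finset.univ : Finset V).val.map fun v => Nat.card (G.neighborSet v)

/-- The radial (vertex–face) graph of a polytope: the bipartite graph on vertices and
2-faces, a vertex `v` being adjacent to a face `F` exactly when `v` lies on `F`. -/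
def radial (P : Set E3) :
    SimpleGraph ({v : E3 // IsVertexOf P v} ⊕ {F : Set E3 // Is2FaceOf P F}) :=
  SimpleGraph.fromRel fun a b =>
    ∃ (v : {v : E3 // IsVertexOf P v}) (F : {F : Set E3 // Is2FaceOf P F}),
      a = Sum.inl v ∧ b = Sum.inr F ∧ (v : E3) ∈ (F : Set E3)

/-- The number of sides of a 2-face of a polytope: the number of polytope vertices
lying on it. -/
def faceSides (P F : Set E3) : ℕ :=
  Nat.card {v : E3 // IsVertexOf P v ∧ v ∈ F}

/-- The explicit graph `S(x,y)` on the `x+y−2` vertices `v_1, …, v_x` (encoded as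
`Sum.inl 0, …, Sum.inl (x-1)`) and `w_1, …, w_(y−2)` (encoded as
`Sum.inr 0, …, Sum.inr (y-3)`), with edges: the cycle `v_1 v_2 … v_x v_1`; the path
`w_1 w_2 … w_(y−2)`; the edges `w_(y−2) v_x` and `v_(x−1) w_1`; the edges `v_1 w_j`
for all `1 ≤ j ≤ y−2`; and the edges `w_1 v_i` for all `2 ≤ i ≤ x−2`. -/
def SxyGraph (x y : ℕ) : SimpleGraph (Fin x ⊕ Fin (y - 2)) :=
  SimpleGraph.fromRel fun a b =>
    match a, b with
    | Sum.inl i, Sum.inl i' => (i' : ℕ) = ((i : ℕ) + 1) % x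
    | Sum.inr j, Sum.inr j' => (j' : ℕ) = (j : ℕ) + 1
    | Sum.inl i, Sum.inr j =>
        ((i : ℕ) = x - 1 ∧ (j : ℕ) = y - 3) ∨
        ((i : ℕ) = x - 2 ∧ (j : ℕ) = 0) ∨
        (i : ℕ) = 0 ∨
        ((j : ℕ) = 0 ∧ 1 ≤ (i : ℕ) ∧ (i : ℕ) ≤ x - 3)
    | Sum.inr _, Sum.inl _ => False

lemma mod_succ_iff {x a b : ℕ} (ha : a < x) (hb : b < x) :
    b = (a + 1) % x ↔ ((a + 1 < x ∧ b = a + 1) ∨ (a + 1 = x ∧ b = 0)) := by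
  rcases lt_or_eq_of_le (Nat.succ_le_of_lt ha) with h | h
  · rw [Nat.mod_eq_of_lt h]; omega
  · rw [← h, Nat.mod_self]; omega

lemma ncard3 {α : Type*} {a b c : α} (hab : a ≠ b) (hac : a ≠ c) (hbc : b ≠ c) :
    ({a, b, c} : Set α).ncard = 3 := by
  rw [Set.ncard_insert_of_notMem (by simp [hab, hac])
      ((Set.finite_singleton c).insert b),
    Set.ncard_pair hbc]

lemma pos_x {x y : ℕ} (hy : 4 ≤ y) (hxy : y ≤ x) : 0 < x := by omega

lemma pos_y {x y : ℕ} (hy : 4 ≤ y) (hxy : y ≤ x) : 0 < y - 2 := by omega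

lemma card_v1 (x y : ℕ) (hy : 4 ≤ y) (hxy : y ≤ x) :
    Nat.card ((SxyGraph x y).neighborSet (Sum.inl ⟨0, pos_x hy hxy⟩)) = y := by
  have hx : 4 ≤ x := hy.trans hxy
  have hset : (SxyGraph x y).neighborSet (Sum.inl ⟨0, by omega⟩) =
      insert (Sum.inl ⟨1, by omega⟩)
        (insert (Sum.inl ⟨x - 1, by omega⟩) (Sum.inr '' Set.univ)) := by
    ext z
    cases z with
    | inl i =>
        simp only [SimpleGraph.mem_neighborSet, SxyGraph, SimpleGraph.fromRel_adj,
          Set.mem_insert_iff, Set.mem_image, Set.mem_univ, Sum.inl.injEq, Sum.inr.injEq,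
          ne_eq, reduceCtorEq, or_false, false_or, and_false, exists_false, Fin.ext_iff,
          Fin.mk.injEq, not_false_iff, true_and, and_true, exists_const, false_and]
        rw [mod_succ_iff (by omega) i.isLt, mod_succ_iff i.isLt (by omega)]
        omega
    | inr j =>
        simp only [SimpleGraph.mem_neighborSet, SxyGraph, SimpleGraph.fromRel_adj,
          Set.mem_insert_iff, Set.mem_image, Set.mem_univ, Sum.inl.injEq, Sum.inr.injEq,
          ne_eq, reduceCtorEq, or_false, false_or, and_false, exists_false, Fin.ext_iff,
          Fin.mk.injEq, not_false_iff, true_and, and_true, exists_const, false_and]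
        exact iff_of_true (Or.inr (Or.inr (Or.inl trivial))) ⟨j, rfl⟩
  rw [Nat.card_coe_set_eq, hset,
    Set.ncard_insert_of_notMem (by simp [Fin.ext_iff] <;> omega)
      (((Set.finite_univ.image _).insert _)),
    Set.ncard_insert_of_notMem (by simp)
      ((Set.finite_univ.image _)),
    Set.ncard_image_of_injective _ Sum.inr_injective, Set.ncard_univ,
    Nat.card_eq_fintype_card, Fintype.card_fin]
  omega

lemma card_w1 (x y : ℕ) (hy : 4 ≤ y) (hxy : y ≤ x) :
    Nat.card ((SxyGraph x y).neighborSet (Sum.inr ⟨0, pos_y hy hxy⟩)) = x := by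
  have hx : 4 ≤ x := hy.trans hxy
  have hset : (SxyGraph x y).neighborSet (Sum.inr ⟨0, by omega⟩) =
      insert (Sum.inr ⟨1, by omega⟩)
        (Sum.inl '' ((fun i : Fin (x - 1) => (⟨(i : ℕ), by omega⟩ : Fin x)) '' Set.univ)) := by
    ext z
    cases z with
    | inl i =>
        simp only [SimpleGraph.mem_neighborSet, SxyGraph, SimpleGraph.fromRel_adj,
          Set.mem_insert_iff, Set.mem_image, Set.mem_univ, Sum.inl.injEq, Sum.inr.injEq,
          ne_eq, reduceCtorEq, or_false, false_or, and_false, exists_false, Fin.ext_iff,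
          Fin.mk.injEq, not_false_iff, true_and, and_true, exists_const, false_and,
          Set.image_image, exists_true_left]
        constructor
        · rintro (⟨h1, h2⟩ | h | h | ⟨h1, h2⟩)
          · omega
          · exact ⟨⟨(i : ℕ), by omega⟩, rfl⟩
          · exact ⟨⟨(i : ℕ), by omega⟩, rfl⟩
          · exact ⟨⟨(i : ℕ), by omega⟩, rfl⟩
        · rintro ⟨a, ha⟩
          have h2 : (a : ℕ) = (i : ℕ) := ha
          have := a.isLt
          omega
    | inr j =>
        simp only [SimpleGraph.mem_neighborSet, SxyGraph, SimpleGraph.fromRel_adj,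
          Set.mem_insert_iff, Set.mem_image, Set.mem_univ, Sum.inl.injEq, Sum.inr.injEq,
          ne_eq, reduceCtorEq, or_false, false_or, and_false, exists_false, Fin.ext_iff,
          Fin.mk.injEq, not_false_iff, true_and, and_true, exists_const, false_and]
        omega
  have hinj : Function.Injective (fun i : Fin (x - 1) => (⟨(i : ℕ), by omega⟩ : Fin x)) := by
    intro a b h
    simpa [Fin.ext_iff] using h
  rw [Nat.card_coe_set_eq, hset,
    Set.ncard_insert_of_notMem (by simp)
      ((Set.finite_univ.image _).image _),
    Set.ncard_image_of_injective _ Sum.inl_injective,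
    Set.ncard_image_of_injective _ hinj, Set.ncard_univ,
    Nat.card_eq_fintype_card, Fintype.card_fin]
  omega

lemma deg3 (x y : ℕ) (hy : 4 ≤ y) (hxy : y ≤ x) (z : Fin x ⊕ Fin (y - 2))
    (hz1 : z ≠ Sum.inl ⟨0, pos_x hy hxy⟩) (hz2 : z ≠ Sum.inr ⟨0, pos_y hy hxy⟩) :
    Nat.card ((SxyGraph x y).neighborSet z) = 3 := by
  have hx : 4 ≤ x := hy.trans hxy
  rw [Nat.card_coe_set_eq]
  cases z with
  | inl i =>
      have hi : (i : ℕ) ≠ 0 := by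
        intro h; exact hz1 (by simp [Fin.ext_iff, h])
      rcases eq_or_ne (i : ℕ) (x - 1) with h | h
      · have hset : (SxyGraph x y).neighborSet (Sum.inl i) =
            {Sum.inl ⟨x - 2, by omega⟩, Sum.inl ⟨0, by omega⟩,
              Sum.inr ⟨y - 3, by omega⟩} := by
          ext z
          cases z with
          | inl i' =>
              simp only [SimpleGraph.mem_neighborSet, SxyGraph, SimpleGraph.fromRel_adj,
                Set.mem_insert_iff, Set.mem_singleton_iff, Sum.inl.injEq, Sum.inr.injEq,
                ne_eq, reduceCtorEq, or_false, false_or, and_false, Fin.ext_iff,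
                Fin.mk.injEq, false_and]
              rw [mod_succ_iff i.isLt i'.isLt, mod_succ_iff i'.isLt i.isLt]
              omega
          | inr j =>
              simp only [SimpleGraph.mem_neighborSet, SxyGraph, SimpleGraph.fromRel_adj,
                Set.mem_insert_iff, Set.mem_singleton_iff, Sum.inl.injEq, Sum.inr.injEq,
                ne_eq, reduceCtorEq, or_false, false_or, and_false, Fin.ext_iff,
                Fin.mk.injEq, false_and, not_false_iff, true_and]
              omega
        rw [hset]
        exact ncard3 (by simp [Fin.ext_iff] <;> omega) (by simp) (by simp)
      · have hset : (SxyGraph x y).neighborSet (Sum.inl i) =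
            {Sum.inl ⟨(i : ℕ) - 1, by omega⟩, Sum.inl ⟨(i : ℕ) + 1, by have := i.isLt; omega⟩,
              Sum.inr ⟨0, by omega⟩} := by
          ext z
          cases z with
          | inl i' =>
              simp only [SimpleGraph.mem_neighborSet, SxyGraph, SimpleGraph.fromRel_adj,
                Set.mem_insert_iff, Set.mem_singleton_iff, Sum.inl.injEq, Sum.inr.injEq,
                ne_eq, reduceCtorEq, or_false, false_or, and_false, Fin.ext_iff,
                Fin.mk.injEq, false_and]
              rw [mod_succ_iff i.isLt i'.isLt, mod_succ_iff i'.isLt i.isLt]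
              have := i.isLt
              omega
          | inr j =>
              simp only [SimpleGraph.mem_neighborSet, SxyGraph, SimpleGraph.fromRel_adj,
                Set.mem_insert_iff, Set.mem_singleton_iff, Sum.inl.injEq, Sum.inr.injEq,
                ne_eq, reduceCtorEq, or_false, false_or, and_false, Fin.ext_iff,
                Fin.mk.injEq, false_and, not_false_iff, true_and]
              have := i.isLt
              omega
        rw [hset]
        have := i.isLt
        exact ncard3 (by simp [Fin.ext_iff] <;> omega) (by simp) (by simp)
  | inr j =>
      have hj : (j : ℕ) ≠ 0 := by
        intro h; exact hz2 (by simp [Fin.ext_iff, h])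
      have hjlt : (j : ℕ) < y - 2 := j.isLt
      rcases eq_or_ne (j : ℕ) (y - 3) with h | h
      · have hset : (SxyGraph x y).neighborSet (Sum.inr j) =
            {Sum.inr ⟨y - 4, by omega⟩, Sum.inl ⟨0, by omega⟩,
              Sum.inl ⟨x - 1, by omega⟩} := by
          ext z
          cases z with
          | inl i' =>
              simp only [SimpleGraph.mem_neighborSet, SxyGraph, SimpleGraph.fromRel_adj,
                Set.mem_insert_iff, Set.mem_singleton_iff, Sum.inl.injEq, Sum.inr.injEq,
                ne_eq, reduceCtorEq, or_false, false_or, and_false, Fin.ext_iff,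
                Fin.mk.injEq, false_and, not_false_iff, true_and]
              omega
          | inr j' =>
              simp only [SimpleGraph.mem_neighborSet, SxyGraph, SimpleGraph.fromRel_adj,
                Set.mem_insert_iff, Set.mem_singleton_iff, Sum.inl.injEq, Sum.inr.injEq,
                ne_eq, reduceCtorEq, or_false, false_or, and_false, Fin.ext_iff,
                Fin.mk.injEq, false_and]
              have := j'.isLt
              omega
        rw [hset]
        exact ncard3 (by simp) (by simp) (by simp [Fin.ext_iff] <;> omega)
      · have hset : (SxyGraph x y).neighborSet (Sum.inr j) =
            {Sum.inr ⟨(j : ℕ) - 1, by omega⟩, Sum.inr ⟨(j : ℕ) + 1, by omega⟩,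
              Sum.inl ⟨0, by omega⟩} := by
          ext z
          cases z with
          | inl i' =>
              simp only [SimpleGraph.mem_neighborSet, SxyGraph, SimpleGraph.fromRel_adj,
                Set.mem_insert_iff, Set.mem_singleton_iff, Sum.inl.injEq, Sum.inr.injEq,
                ne_eq, reduceCtorEq, or_false, false_or, and_false, Fin.ext_iff,
                Fin.mk.injEq, false_and, not_false_iff, true_and]
              omega
          | inr j' =>
              simp only [SimpleGraph.mem_neighborSet, SxyGraph, SimpleGraph.fromRel_adj,
                Set.mem_insert_iff, Set.mem_singleton_iff, Sum.inl.injEq, Sum.inr.injEq,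
                ne_eq, reduceCtorEq, or_false, false_or, and_false, Fin.ext_iff,
                Fin.mk.injEq, false_and]
              have := j'.isLt
              omega
        rw [hset]
        exact ncard3 (by simp [Fin.ext_iff] <;> omega) (by simp) (by simp)

/-- Fix integers `x ≥ y ≥ 4`. In the graph `SxyGraph x y` described
above, the vertex `v_1` has degree `y`, the vertex `w_1` has degree `x`, and every other
vertex has degree `3`; that is, its degree sequence is `x, y, 3^(x+y−4)`. -/
theorem SxyGraph_degrees (x y : ℕ) (hy : 4 ≤ y) (hxy : y ≤ x) :
    Nat.card ((SxyGraph x y).neighborSet (Sum.inl ⟨0, by omega⟩)) = y ∧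
    Nat.card ((SxyGraph x y).neighborSet (Sum.inr ⟨0, by omega⟩)) = x ∧
    (∀ z : Fin x ⊕ Fin (y - 2),
      z ≠ Sum.inl ⟨0, by omega⟩ → z ≠ Sum.inr ⟨0, by omega⟩ →
      Nat.card ((SxyGraph x y).neighborSet z) = 3) ∧
    degSeq (SxyGraph x y) = x ::ₘ y ::ₘ Multiset.replicate (x + y - 4) 3 := by
  have hx : 4 ≤ x := hy.trans hxy
  refine ⟨card_v1 x y hy hxy, card_w1 x y hy hxy, deg3 x y hy hxy, ?_⟩
  classical
  set a : Fin x ⊕ Fin (y - 2) := Sum.inl ⟨0, by omega⟩ with ha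
  set b : Fin x ⊕ Fin (y - 2) := Sum.inr ⟨0, by omega⟩ with hb
  have hab : a ≠ b := by simp [ha, hb]
  have hma : a ∈ (Finset.univ : Finset (Fin x ⊕ Fin (y - 2))).val := Finset.mem_univ a
  have hnd : (Finset.univ : Finset (Fin x ⊕ Fin (y - 2))).val.Nodup := Finset.univ.nodup
  have hmb : b ∈ (Finset.univ : Finset (Fin x ⊕ Fin (y - 2))).val.erase a := by
    rw [hnd.mem_erase_iff]; exact ⟨hab.symm, Finset.mem_univ b⟩
  set s : Multiset (Fin x ⊕ Fin (y - 2)) :=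
    (((Finset.univ : Finset (Fin x ⊕ Fin (y - 2))).val.erase a).erase b) with hs
  have hsplit : (Finset.univ : Finset (Fin x ⊕ Fin (y - 2))).val = a ::ₘ b ::ₘ s := by
    rw [hs, Multiset.cons_erase hmb, Multiset.cons_erase hma]
  have hcard : Multiset.card s = x + y - 4 := by
    rw [hs, Multiset.card_erase_of_mem hmb, Multiset.card_erase_of_mem hma]
    simp only [Finset.card_val, Finset.card_univ, Fintype.card_sum, Fintype.card_fin,
      Nat.pred_eq_sub_one]
    omega
  unfold degSeq
  rw [hsplit, Multiset.map_cons, Multiset.map_cons]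
  have h3 : ∀ z ∈ s, Nat.card ((SxyGraph x y).neighborSet z) = 3 := by
    intro z hz
    have hzb : z ≠ b := ((hnd.erase a).mem_erase_iff.mp hz).1
    have hza : z ≠ a := (hnd.mem_erase_iff.mp (Multiset.mem_of_le (Multiset.erase_le _ _) hz)).1
    exact deg3 x y hy hxy z hza hzb
  have hmap : s.map (fun v => Nat.card ((SxyGraph x y).neighborSet v)) =
      Multiset.replicate (x + y - 4) 3 := by
    rw [Multiset.map_congr rfl h3, Multiset.map_const', hcard]
  rw [hmap, card_v1 x y hy hxy, card_w1 x y hy hxy, Multiset.cons_swap]
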